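/- There exists a linear program in ℝ² with four half-plane constraints {h₁, h₂, h₃, h₄} that is not persistent: specifically, one can choose constraints such that {h₁, h₂} is a basis of {h₁, h₂, h₃, h₄} but h₂ does not belong to the basis of {h₂, h₃, h₄} (i.e., {h₃, h₄} is a basis of {h₂, h₃, h₄}). -/

import Mathlib

/-- `x` is feasible for the constraints indexed by `S`. -/
def LPFeasible (a : Fin 4 → ℝ × ℝ) (b : Fin 4 → ℝ) (S : Finset (Fin 4)) (x : ℝ × ℝ) : Prop :=
  ∀ i ∈ S, (a i).1 * x.1 + (a i).2 * x.2 ≤ b i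

/-- `x` is the lexicographically minimal minimizer of `cᵀx` over the constraints in `S`:
it is feasible, it minimizes the cost, and among all feasible cost minimizers
it is lexicographically minimal. -/
def IsLexMinOpt (c : ℝ × ℝ) (a : Fin 4 → ℝ × ℝ) (b : Fin 4 → ℝ)
    (S : Finset (Fin 4)) (x : ℝ × ℝ) : Prop :=
  LPFeasible a b S x ∧
  (∀ y, LPFeasible a b S y → c.1 * x.1 + c.2 * x.2 ≤ c.1 * y.1 + c.2 * y.2) ∧
  (∀ y, LPFeasible a b S y → c.1 * y.1 + c.2 * y.2 = c.1 * x.1 + c.2 * x.2 →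
    x.1 < y.1 ∨ (x.1 = y.1 ∧ x.2 ≤ y.2))

/-- There exists a linear program in `ℝ²` with four half-plane constraints that is
not persistent: `{h₁, h₂}` is a basis of `{h₁, h₂, h₃, h₄}`, but `{h₃, h₄}` is a
basis of `{h₂, h₃, h₄}`, i.e. `h₂` does not belong to the basis of `{h₂, h₃, h₄}`. -/
theorem exists_non_persistent_linear_program :
    ∃ (c : ℝ × ℝ) (a : Fin 4 → ℝ × ℝ) (b : Fin 4 → ℝ) (x₁₂ x₃₄ : ℝ × ℝ),
      -- {h₁,h₂} is a basis of the full problem {h₁,h₂,h₃,h₄}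
      IsLexMinOpt c a b {0, 1, 2, 3} x₁₂ ∧
      IsLexMinOpt c a b {0, 1} x₁₂ ∧
      (∀ T ⊂ ({0, 1} : Finset (Fin 4)), ∀ y, IsLexMinOpt c a b T y → y ≠ x₁₂) ∧
      -- {h₃,h₄} is a basis of {h₂,h₃,h₄}, so h₂ is not in the basis of {h₂,h₃,h₄}
      IsLexMinOpt c a b {1, 2, 3} x₃₄ ∧
      IsLexMinOpt c a b {2, 3} x₃₄ ∧
      (∀ T ⊂ ({2, 3} : Finset (Fin 4)), ∀ y, IsLexMinOpt c a b T y → y ≠ x₃₄) ∧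
      x₁₂ ≠ x₃₄ := by
  classical
  refine ⟨(0, 1), ![(0, -1), (-1, 0), (1, -1), (-1, -1)], ![0, 0, 1, 1],
    (0, 0), (0, -1), ?_, ?_, ?_, ?_, ?_, ?_, ?_⟩
  · refine ⟨?_, ?_, ?_⟩
    · intro i hi; fin_cases hi <;> norm_num <;> simp
    · intro y hy
      have h0 : (0:ℝ) * y.1 + (-1) * y.2 ≤ 0 := hy 0 (by decide)
      simp only; nlinarith
    · intro y hy hcost
      have h1 : (-1:ℝ) * y.1 + 0 * y.2 ≤ 0 := hy 1 (by decide)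
      simp only at hcost ⊢
      rcases lt_or_eq_of_le (by linarith : (0:ℝ) ≤ y.1) with h | h
      · exact Or.inl h
      · exact Or.inr ⟨h, by linarith⟩
  · refine ⟨?_, ?_, ?_⟩
    · intro i hi; fin_cases hi <;> norm_num <;> simp
    · intro y hy
      have h0 : (0:ℝ) * y.1 + (-1) * y.2 ≤ 0 := hy 0 (by decide)
      simp only; nlinarith
    · intro y hy hcost
      have h1 : (-1:ℝ) * y.1 + 0 * y.2 ≤ 0 := hy 1 (by decide)
      simp only at hcost ⊢
      rcases lt_or_eq_of_le (by linarith : (0:ℝ) ≤ y.1) with h | h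
      · exact Or.inl h
      · exact Or.inr ⟨h, by linarith⟩
  · have hc : ∀ T : Finset (Fin 4), T ⊂ {0, 1} → T = ∅ ∨ T = {0} ∨ T = {1} := by decide
    intro T hT y hy
    exfalso
    rcases hc T hT with rfl | rfl | rfl
    · have h := hy.2.1 (y.1, y.2 - 1) (by intro i hi; simp at hi)
      simp only at h; linarith
    · have hy0 : (0:ℝ) * y.1 + (-1) * y.2 ≤ 0 := hy.1 0 (by decide)
      have hf : LPFeasible ![(0, -1), (-1, 0), (1, -1), (-1, -1)] ![0, 0, 1, 1] {0}
          (y.1 - 1, y.2) := by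
        intro i hi; fin_cases hi
        show (0:ℝ) * (y.1 - 1) + (-1) * y.2 ≤ 0
        linarith
      have h := hy.2.2 (y.1 - 1, y.2) hf (by simp)
      simp only at h
      rcases h with h | ⟨h, _⟩ <;> linarith
    · have hf : LPFeasible ![(0, -1), (-1, 0), (1, -1), (-1, -1)] ![0, 0, 1, 1] {1}
          (y.1, y.2 - 1) := by
        intro i hi; fin_cases hi
        have h1 : (-1:ℝ) * y.1 + 0 * y.2 ≤ 0 := hy.1 1 (by decide)
        show (-1:ℝ) * y.1 + 0 * (y.2 - 1) ≤ 0
        linarith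
      have h := hy.2.1 (y.1, y.2 - 1) hf
      simp only at h; linarith
  · refine ⟨?_, ?_, ?_⟩
    · intro i hi; fin_cases hi <;> norm_num <;> simp
    · intro y hy
      have h1 : (-1:ℝ) * y.1 + 0 * y.2 ≤ 0 := hy 1 (by decide)
      have h2 : (1:ℝ) * y.1 + (-1) * y.2 ≤ 1 := hy 2 (by decide)
      simp only; nlinarith
    · intro y hy hcost
      have h1 : (-1:ℝ) * y.1 + 0 * y.2 ≤ 0 := hy 1 (by decide)
      have h2 : (1:ℝ) * y.1 + (-1) * y.2 ≤ 1 := hy 2 (by decide)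
      simp only at hcost ⊢
      exact Or.inr ⟨by linarith, by linarith⟩
  · refine ⟨?_, ?_, ?_⟩
    · intro i hi; fin_cases hi <;> norm_num <;> simp
    · intro y hy
      have h2 : (1:ℝ) * y.1 + (-1) * y.2 ≤ 1 := hy 2 (by decide)
      have h3 : (-1:ℝ) * y.1 + (-1) * y.2 ≤ 1 := hy 3 (by decide)
      simp only; nlinarith
    · intro y hy hcost
      have h2 : (1:ℝ) * y.1 + (-1) * y.2 ≤ 1 := hy 2 (by decide)
      have h3 : (-1:ℝ) * y.1 + (-1) * y.2 ≤ 1 := hy 3 (by decide)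
      simp only at hcost ⊢
      exact Or.inr ⟨by linarith, by linarith⟩
  · have hc : ∀ T : Finset (Fin 4), T ⊂ {2, 3} → T = ∅ ∨ T = {2} ∨ T = {3} := by decide
    intro T hT y hy
    exfalso
    rcases hc T hT with rfl | rfl | rfl
    · have h := hy.2.1 (y.1, y.2 - 1) (by intro i hi; simp at hi)
      simp only at h; linarith
    · have hf : LPFeasible ![(0, -1), (-1, 0), (1, -1), (-1, -1)] ![0, 0, 1, 1] {2}
          (y.2, y.2 - 1) := by
        intro i hi; fin_cases hi
        show (1:ℝ) * y.2 + (-1) * (y.2 - 1) ≤ 1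
        linarith
      have h := hy.2.1 (y.2, y.2 - 1) hf
      simp only at h; linarith
    · have hf : LPFeasible ![(0, -1), (-1, 0), (1, -1), (-1, -1)] ![0, 0, 1, 1] {3}
          (-y.2, y.2 - 1) := by
        intro i hi; fin_cases hi
        show (-1:ℝ) * (-y.2) + (-1) * (y.2 - 1) ≤ 1
        linarith
      have h := hy.2.1 (-y.2, y.2 - 1) hf
      simp only at h; linarith
  · intro h
    have := congrArg Prod.snd h
    norm_num at this
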